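/- Let f : ℝ → ℝ be infinitely differentiable (C^∞) and suppose that all odd-order iterated derivatives of f vanish at 0, i.e. f^{(2j+1)}(0) = 0 for every j ∈ ℕ. Then the even reflection f̃ : ℝ → ℝ defined by f̃(t) = f(|t|) is infinitely differentiable (C^∞) on ℝ. -/

import Mathlib

noncomputable def oddExt (f : ℝ → ℝ) : ℝ → ℝ := fun t => if t < 0 then -f (-t) else f t

/-- A derivative at `0` from a norm comparison with the even reflection. -/
lemma hasDerivAt_zero_of_abs (f g : ℝ → ℝ) (c : ℝ) (hf : HasDerivAt f c 0)
    (heq : ∀ t, |g t - g 0 - t * c| = |f |t| - f 0 - |t| * c|) : HasDerivAt g c 0 := by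
  rw [hasDerivAt_iff_isLittleO] at hf ⊢
  have habs : Filter.Tendsto (fun t : ℝ => |t|) (nhds 0) (nhds 0) := by
    simpa using continuous_abs.tendsto (0 : ℝ)
  have h2 := hf.comp_tendsto habs
  rw [Asymptotics.isLittleO_iff] at h2 ⊢
  intro ε hε
  filter_upwards [h2 hε] with t ht
  simp only [Function.comp, sub_zero, smul_eq_mul, Real.norm_eq_abs] at *
  calc |g t - g 0 - t * c| = |f |t| - f 0 - |t| * c| := heq t
    _ ≤ ε * |(|t|)| := ht
    _ = ε * |t| := by rw [abs_abs]

lemma key (n : ℕ) : ∀ f : ℝ → ℝ, ContDiff ℝ (⊤ : ℕ∞) f →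
    ((∀ j : ℕ, iteratedDeriv (2 * j + 1) f 0 = 0) → ContDiff ℝ (n : ℕ∞) (fun t => f |t|)) ∧
    ((∀ j : ℕ, iteratedDeriv (2 * j) f 0 = 0) → ContDiff ℝ (n : ℕ∞) (oddExt f)) := by
  induction n with
  | zero =>
    intro f hf
    constructor
    · intro _
      simp only [Nat.cast_zero, WithTop.coe_zero, contDiff_zero]
      exact hf.continuous.comp continuous_abs
    · intro heven
      simp only [Nat.cast_zero, WithTop.coe_zero, contDiff_zero]
      have h0 : f 0 = 0 := by simpa using heven 0
      have : Continuous fun t : ℝ => if t ≤ 0 then -f (-t) else f t := by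
        refine Continuous.if_le ((hf.continuous.comp continuous_neg).neg) hf.continuous
          continuous_id continuous_const ?_
        intro x hx
        replace hx : x = 0 := hx
        simp [hx, h0]
      convert this using 1
      funext t
      rcases lt_trichotomy t 0 with h | h | h
      · simp [oddExt, h, h.le]
      · simp [oddExt, h, h0]
      · simp [oddExt, not_lt.2 h.le, not_le.2 h]
  | succ n ih =>
    intro f hf
    have hdiff : Differentiable ℝ f := hf.differentiable (by norm_num)
    have hdf : ContDiff ℝ (⊤ : ℕ∞) (deriv f) := (contDiff_infty_iff_deriv.1 hf).2
    constructor
    · intro hodd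
      have hd0 : deriv f 0 = 0 := by simpa [iteratedDeriv_one] using hodd 0
      -- derivative of the even reflection is the odd extension of `deriv f`
      have hD : ∀ t : ℝ, HasDerivAt (fun s => f |s|) (oddExt (deriv f) t) t := by
        intro t
        rcases lt_trichotomy t 0 with h | h | h
        · have h1 : HasDerivAt (fun s : ℝ => f (-s)) (-deriv f (-t)) t := by
            simpa [Function.comp_def] using ((hdiff (-t)).hasDerivAt).comp t (hasDerivAt_neg t)
          have h2 : (fun s : ℝ => f (-s)) =ᶠ[nhds t] fun s => f |s| := by
            filter_upwards [Iio_mem_nhds h] with s hs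
            rw [abs_of_neg hs]
          simpa [oddExt, h] using h1.congr_of_eventuallyEq h2.symm
        · subst h
          have : HasDerivAt (fun s => f |s|) (deriv f 0) 0 := by
            apply hasDerivAt_zero_of_abs f _ _ (hdiff 0).hasDerivAt
            intro t; simp [hd0]
          simpa [oddExt, hd0] using this
        · have h1 : HasDerivAt f (deriv f t) t := (hdiff t).hasDerivAt
          have h2 : f =ᶠ[nhds t] fun s => f |s| := by
            filter_upwards [Ioi_mem_nhds h] with s hs
            rw [abs_of_pos hs]
          simpa [oddExt, not_lt.2 h.le] using h1.congr_of_eventuallyEq h2.symm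
      have hderiv : deriv (fun s => f |s|) = oddExt (deriv f) := funext fun t => (hD t).deriv
      have hIH : ContDiff ℝ (n : ℕ∞) (oddExt (deriv f)) := by
        refine (ih (deriv f) hdf).2 ?_
        intro j
        have := hodd j
        rwa [iteratedDeriv_succ'] at this
      push_cast
      rw [contDiff_succ_iff_deriv]
      refine ⟨fun t => ((hD t).differentiableAt), by simp, ?_⟩
      rw [hderiv]; exact_mod_cast hIH
    · intro heven
      have h0 : f 0 = 0 := by simpa using heven 0
      have hD : ∀ t : ℝ, HasDerivAt (oddExt f) (deriv f |t|) t := by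
        intro t
        rcases lt_trichotomy t 0 with h | h | h
        · have h1 : HasDerivAt (fun s : ℝ => -f (-s)) (deriv f (-t)) t := by
            have := ((hdiff (-t)).hasDerivAt).comp t (hasDerivAt_neg t)
            simpa [Function.comp_def, Pi.neg_def] using this.neg
          have h2 : (fun s : ℝ => -f (-s)) =ᶠ[nhds t] oddExt f := by
            filter_upwards [Iio_mem_nhds h] with s hs
            simp [oddExt, Set.mem_Iio.1 hs]
          simpa [abs_of_neg h] using h1.congr_of_eventuallyEq h2.symm
        · subst h
          have : HasDerivAt (oddExt f) (deriv f 0) 0 := by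
            apply hasDerivAt_zero_of_abs f _ _ (hdiff 0).hasDerivAt
            intro t
            rcases lt_trichotomy t 0 with h | h | h
            · have : oddExt f t = -f (-t) := by simp [oddExt, h]
              rw [this, abs_of_neg h]
              have : oddExt f 0 = f 0 := by simp [oddExt]
              rw [this, h0]
              rw [show -f (-t) - 0 - t * deriv f 0 = -(f (-t) - 0 - -t * deriv f 0) by ring,
                abs_neg]
            · subst h; simp [oddExt]
            · have h1 : oddExt f t = f t := by simp [oddExt, not_lt.2 h.le]
              have h2 : oddExt f 0 = f 0 := by simp [oddExt]
              rw [h1, h2, abs_of_pos h]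
          simpa using this
        · have h1 : HasDerivAt f (deriv f t) t := (hdiff t).hasDerivAt
          have h2 : f =ᶠ[nhds t] oddExt f := by
            filter_upwards [Ioi_mem_nhds h] with s hs
            simp [oddExt, not_lt.2 (Set.mem_Ioi.1 hs).le]
          simpa [abs_of_pos h] using h1.congr_of_eventuallyEq h2.symm
      have hderiv : deriv (oddExt f) = fun t => deriv f |t| := funext fun t => (hD t).deriv
      have hIH : ContDiff ℝ (n : ℕ∞) (fun t => deriv f |t|) := by
        refine (ih (deriv f) hdf).1 ?_
        intro j
        have := heven (j + 1)
        rw [show 2 * (j + 1) = (2 * j + 1) + 1 by ring, iteratedDeriv_succ'] at this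
        exact this
      push_cast
      rw [contDiff_succ_iff_deriv]
      refine ⟨fun t => ((hD t).differentiableAt), by simp, ?_⟩
      rw [hderiv]; exact_mod_cast hIH

/-- Even reflection of a smooth function whose odd-order derivatives vanish at `0` is
smooth. -/
theorem even_reflection_smooth (f : ℝ → ℝ) (hf : ContDiff ℝ (⊤ : ℕ∞) f)
    (hodd : ∀ j : ℕ, iteratedDeriv (2 * j + 1) f 0 = 0) :
    ContDiff ℝ (⊤ : ℕ∞) (fun t => f |t|) := by
  rw [contDiff_infty]
  exact fun n => (key n f hf).1 hodd
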